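/- Let n ≥ 2 and δ ≥ 4 ln n. Let a, b ∈ ℝ^n satisfy: a_1 > a_2 > ⋯ > a_n and b_1 > b_2 > ⋯ > b_n; a_i − a_j > δ and b_i − b_j > δ for all 1 ≤ i < j ≤ n; |a_i − b_j| > δ for all i, j ∈ [n] with a_i ≠ b_j; (a_1,…,a_k) = (b_1,…,b_k) for some k ∈ [n−1]; and a_{k+1} > b_{k+1}. Then |Boltz(a) − Boltz(b)| > (ln n)² · e^{−(a_1 − b_{k+1})}. -/
import Mathlib


/-- The softmax of a vector `z ∈ ℝⁿ`: `softmax(z)_i = exp(z_i) / ∑_j exp(z_j)`. -/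
noncomputable def softmaxVec {n : ℕ} (z : Fin n → ℝ) : Fin n → ℝ :=
  fun i => Real.exp (z i) / ∑ j, Real.exp (z j)

/-- The Boltzmann operator `Boltz(z) = ∑_i z_i · softmax(z)_i`. -/
noncomputable def boltz {n : ℕ} (z : Fin n → ℝ) : ℝ :=
  ∑ i, z i * softmaxVec z i

lemma te_anti {s t : ℝ} (h1 : 1 ≤ s) (h2 : s ≤ t) :
    t * Real.exp (-t) ≤ s * Real.exp (-s) := by
  have h3 : t ≤ s * Real.exp (t - s) := by
    nlinarith [Real.add_one_le_exp (t - s),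
      mul_nonneg (by linarith : (0:ℝ) ≤ s - 1) (by linarith : (0:ℝ) ≤ t - s)]
  calc t * Real.exp (-t) ≤ (s * Real.exp (t - s)) * Real.exp (-t) := by
        exact mul_le_mul_of_nonneg_right h3 (Real.exp_pos _).le
    _ = s * Real.exp (-s) := by rw [mul_assoc, ← Real.exp_add]; ring_nf

lemma boltz_eq_div {n : ℕ} (z : Fin n → ℝ) :
    boltz z = (∑ i, z i * Real.exp (z i)) / (∑ i, Real.exp (z i)) := by
  unfold boltz softmaxVec
  rw [Finset.sum_div]
  exact Finset.sum_congr rfl fun i _ => by ring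

lemma boltz_shift {n : ℕ} (hn : 0 < n) (z : Fin n → ℝ) (c : ℝ) :
    boltz (fun i => z i - c) = boltz z - c := by
  have : Nonempty (Fin n) := Fin.pos_iff_nonempty.mp hn
  have hS : (0:ℝ) < ∑ i, Real.exp (z i) :=
    Finset.sum_pos (fun i _ => Real.exp_pos _) Finset.univ_nonempty
  rw [boltz_eq_div, boltz_eq_div]
  have h1 : ∀ i : Fin n, Real.exp (z i - c) = Real.exp (z i) * Real.exp (-c) := by
    intro i; rw [← Real.exp_add]; ring_nf
  have h2 : (∑ i, Real.exp (z i - c)) = (∑ i, Real.exp (z i)) * Real.exp (-c) := by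
    rw [Finset.sum_mul]; exact Finset.sum_congr rfl fun i _ => h1 i
  have h3 : (∑ i, (z i - c) * Real.exp (z i - c))
      = ((∑ i, z i * Real.exp (z i)) - c * ∑ i, Real.exp (z i)) * Real.exp (-c) := by
    have h4 : ∀ i : Fin n, (z i - c) * Real.exp (z i - c)
        = z i * Real.exp (z i) * Real.exp (-c) - c * (Real.exp (z i) * Real.exp (-c)) :=
      fun i => by rw [h1 i]; ring
    simp only [h4, Finset.sum_sub_distrib, ← Finset.sum_mul, ← Finset.mul_sum]
    ring
  rw [h2, h3, mul_div_mul_right _ _ (Real.exp_ne_zero _), sub_div, mul_div_assoc,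
    div_self hS.ne', mul_one]


set_option maxHeartbeats 1600000 in
/-- for strictly decreasing, `δ`-gapped vectors `a, b` (`δ ≥ 4 ln n`,
cross-separation `|a_i − b_j| > δ` whenever `a_i ≠ b_j`) which share their top `k`
entries (`1 ≤ k ≤ n−1`) and satisfy `a_{k+1} > b_{k+1}`,
`|Boltz(a) − Boltz(b)| > (ln n)² e^{−(a₁ − b_{k+1})}`. -/
theorem abs_boltz_sub_boltz_gt_of_top_k_same {n : ℕ} (hn : 2 ≤ n) (δ : ℝ)
    (hδ : 4 * Real.log n ≤ δ) (a b : Fin n → ℝ)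
    (hadec : ∀ i j : Fin n, i < j → a i > a j)
    (hbdec : ∀ i j : Fin n, i < j → b i > b j)
    (hagap : ∀ i j : Fin n, i < j → a i - a j > δ)
    (hbgap : ∀ i j : Fin n, i < j → b i - b j > δ)
    (hab : ∀ i j : Fin n, a i ≠ b j → |a i - b j| > δ)
    (k : ℕ) (hk1 : 1 ≤ k) (hk2 : k ≤ n - 1)
    (hsame : ∀ i : Fin n, (i : ℕ) < k → a i = b i)
    (hk : a ⟨k, by omega⟩ > b ⟨k, by omega⟩) :
    |boltz a - boltz b| >
      Real.log n ^ 2 * Real.exp (-(a ⟨0, by omega⟩ - b ⟨k, by omega⟩)) := by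
  have hkn : k < n := by omega
  have hn0 : 0 < n := by omega
  set i0 : Fin n := ⟨0, hn0⟩ with hi0def
  set ik : Fin n := ⟨k, hkn⟩ with hikdef
  show Real.log n ^ 2 * Real.exp (-(a i0 - b ik)) < |boltz a - boltz b|
  have hi0v : (i0 : ℕ) = 0 := rfl
  have hikv : (ik : ℕ) = k := rfl
  have hb0 : b i0 = a i0 := (hsame i0 (by omega)).symm
  set c := a i0 with hc
  set u : Fin n → ℝ := fun i => a i - c with hudef
  set v : Fin n → ℝ := fun i => b i - c with hvdef
  -- numeric setup
  have hn2 : (2:ℝ) ≤ (n:ℝ) := by exact_mod_cast hn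
  have hn1R : (1:ℝ) < (n:ℝ) := by linarith only [hn2]
  have hL : 0 < Real.log n := Real.log_pos hn1R
  set L := Real.log n with hLdef
  set E := Real.exp (-δ) with hEdef
  have hEpos : 0 < E := Real.exp_pos _
  have hn4E : (n:ℝ)^4 * E ≤ 1 := by
    have h1 : E ≤ Real.exp (-(Real.log ((n:ℝ)^4))) := by
      rw [hEdef]
      apply Real.exp_le_exp.mpr
      rw [Real.log_pow]
      push_cast
      linarith only [hδ, hLdef]
    have h2 : Real.exp (-(Real.log ((n:ℝ)^4))) = ((n:ℝ)^4)⁻¹ := by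
      rw [Real.exp_neg, Real.exp_log (by positivity)]
    have h3 : E ≤ ((n:ℝ)^4)⁻¹ := h2 ▸ h1
    have h4 : (0:ℝ) < (n:ℝ)^4 := by positivity
    calc (n:ℝ)^4 * E ≤ (n:ℝ)^4 * ((n:ℝ)^4)⁻¹ := by
          exact mul_le_mul_of_nonneg_left h3 h4.le
      _ = 1 := mul_inv_cancel₀ h4.ne'
  have hδ2 : (2:ℝ) ≤ δ := by
    have h1 := Real.log_two_gt_d9
    have h2 : Real.log 2 ≤ Real.log n := Real.log_le_log (by norm_num) hn2
    linarith only [h1, h2, hδ, hLdef]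
  have hn3 : (8:ℝ) ≤ (n:ℝ)^3 := by
    nlinarith only [hn2, mul_nonneg (by linarith only [hn2] : (0:ℝ) ≤ (n:ℝ)-2)
      (by positivity : (0:ℝ) ≤ (n:ℝ)^2+2*(n:ℝ)+4)]
  have hnn4 : 8*(n:ℝ) ≤ (n:ℝ)^4 := by
    nlinarith only [mul_le_mul_of_nonneg_right hn3 (by positivity : (0:ℝ) ≤ (n:ℝ))]
  have hnE : (n:ℝ) * E ≤ 1/8 := by
    nlinarith only [hn4E, hEpos,
      mul_le_mul_of_nonneg_right hn3 (by positivity : (0:ℝ) ≤ (n:ℝ) * E)]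
  -- index facts
  have hi0ik : i0 < ik := by
    rw [Fin.lt_def]; omega
  set X := c - a ik with hXdef
  set Y := c - b ik with hYdef
  have hXδ : δ < X := hagap i0 ik hi0ik
  have hYX : δ < Y - X := by
    have h1 : a ik ≠ b ik := ne_of_gt hk
    have h2 := hab ik ik h1
    rw [abs_of_pos (by linarith only [hk])] at h2
    have h3 : Y - X = a ik - b ik := by rw [hXdef, hYdef]; ring
    linarith only [h2, h3]
  set W := Real.exp (-X) with hWdef
  set Z := Real.exp (-Y) with hZdef
  have hWpos : 0 < W := Real.exp_pos _
  have hZpos : 0 < Z := Real.exp_pos _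
  -- pointwise facts
  have huv : ∀ i : Fin n, (i:ℕ) < k → u i = v i := by
    intro i hi; simp only [hudef, hvdef, hsame i hi]
  have hu0 : u i0 = 0 := by simp [hudef, hc]
  have hv0 : v i0 = 0 := by simp [hvdef, hb0]
  have hune : ∀ i : Fin n, i ≠ i0 → u i < -δ := by
    intro i hi
    have hpos : 0 < (i:ℕ) := Nat.pos_of_ne_zero (fun h => hi (Fin.ext (h.trans hi0v.symm)))
    have : i0 < i := by rw [Fin.lt_def]; omega
    have h2 := hagap i0 i this
    show a i - c < -δ
    rw [hc]; linarith only [h2]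
  have hvne : ∀ i : Fin n, i ≠ i0 → v i < -δ := by
    intro i hi
    have hpos : 0 < (i:ℕ) := Nat.pos_of_ne_zero (fun h => hi (Fin.ext (h.trans hi0v.symm)))
    have : i0 < i := by rw [Fin.lt_def]; omega
    have h2 := hbgap i0 i this
    show b i - c < -δ
    linarith only [h2, hb0]
  have huik : u ik = -X := by show a ik - c = -(c - a ik); ring
  have hvik : v ik = -Y := by show b ik - c = -(c - b ik); ring
  have hutail : ∀ i : Fin n, ik < i → u i < -X - δ := by
    intro i hi
    have h2 := hagap ik i hi
    show a i - c < -X - δ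
    rw [hXdef]; linarith only [h2]
  have hvtail : ∀ i : Fin n, ik < i → v i < -Y - δ := by
    intro i hi
    have h2 := hbgap ik i hi
    show b i - c < -Y - δ
    rw [hYdef]; linarith only [h2]
  -- sums
  classical
  set K : Finset (Fin n) := Finset.univ.filter (fun i => (i:ℕ) < k) with hKdef
  set Kc : Finset (Fin n) := Finset.univ.filter (fun i => ¬ (i:ℕ) < k) with hKcdef
  set Q := ∑ i ∈ K, Real.exp (u i) with hQdef
  set P := ∑ i ∈ K, (-(u i)) * Real.exp (u i) with hPdef
  set Aa := ∑ i ∈ Kc, (-(u i)) * Real.exp (u i) with hAadef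
  set Bb := ∑ i ∈ Kc, (-(v i)) * Real.exp (v i) with hBbdef
  set ra := ∑ i ∈ Kc, Real.exp (u i) with hradef
  set rb := ∑ i ∈ Kc, Real.exp (v i) with hrbdef
  set Ru := ∑ i, Real.exp (u i) with hRudef
  set Rv := ∑ i, Real.exp (v i) with hRvdef
  clear_value c u v X Y W Z E L K Kc Q P Aa Bb ra rb Ru Rv
  have hKmem : ∀ i : Fin n, i ∈ K ↔ (i:ℕ) < k := by
    intro i; simp [hKdef]
  have hKcmem : ∀ i : Fin n, i ∈ Kc ↔ k ≤ (i:ℕ) := by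
    intro i; simp only [hKcdef, Finset.mem_filter, Finset.mem_univ, true_and, not_lt]
  have hikKc : ik ∈ Kc := (hKcmem ik).mpr (by omega)
  have hi0K : i0 ∈ K := (hKmem i0).mpr (by omega)
  have hKctail : ∀ i : Fin n, i ∈ Kc → i ≠ ik → ik < i := by
    intro i hi hne
    have h1 : k ≤ (i:ℕ) := (hKcmem i).mp hi
    have h2 : (i:ℕ) ≠ k := fun h => hne (Fin.ext (h.trans hikv.symm))
    rw [Fin.lt_def]; omega
  have hKcne0 : ∀ i : Fin n, i ∈ Kc → i ≠ i0 := by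
    intro i hi h
    have := (hKcmem i).mp hi
    rw [h, hi0v] at this; omega
  have hsplit : ∀ f : Fin n → ℝ, (∑ i ∈ K, f i) + (∑ i ∈ Kc, f i) = ∑ i, f i := by
    intro f; rw [hKdef, hKcdef]; exact Finset.sum_filter_add_sum_filter_not _ _ _
  have hRuQ : Ru = Q + ra := by
    rw [hRudef, hQdef, hradef]; exact (hsplit _).symm
  have hQv : (∑ i ∈ K, Real.exp (v i)) = Q := by
    rw [hQdef]
    exact Finset.sum_congr rfl fun i hi => by rw [← huv i ((hKmem i).mp hi)]
  have hPv : (∑ i ∈ K, (-(v i)) * Real.exp (v i)) = P := by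
    rw [hPdef]
    exact Finset.sum_congr rfl fun i hi => by rw [← huv i ((hKmem i).mp hi)]
  have hRvQ : Rv = Q + rb := by
    rw [hRvdef, ← hQv, hrbdef]; exact (hsplit _).symm
  have hTu : (∑ i, u i * Real.exp (u i)) = -(P + Aa) := by
    rw [hPdef, hAadef, ← hsplit (fun i => u i * Real.exp (u i))]
    simp only [neg_mul, Finset.sum_neg_distrib]
    ring
  have hTv : (∑ i, v i * Real.exp (v i)) = -(P + Bb) := by
    rw [← hPv, hBbdef, ← hsplit (fun i => v i * Real.exp (v i))]
    simp only [neg_mul, Finset.sum_neg_distrib]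
    ring
  -- cardinality helper
  have hcardn : ∀ s : Finset (Fin n), ((s.card : ℝ)) ≤ (n:ℝ) := by
    intro s
    have h : s.card ≤ n := by simpa using Finset.card_le_univ s
    exact_mod_cast h
  -- nonnegativity of tail terms
  have hKcu : ∀ i ∈ Kc, 0 ≤ (-(u i)) * Real.exp (u i) := by
    intro i hi
    have h1 := hune i (hKcne0 i hi)
    exact mul_nonneg (by linarith only [h1, hδ2]) (Real.exp_pos _).le
  have hKcv : ∀ i ∈ Kc, 0 ≤ (-(v i)) * Real.exp (v i) := by
    intro i hi
    have h1 := hvne i (hKcne0 i hi)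
    exact mul_nonneg (by linarith only [h1, hδ2]) (Real.exp_pos _).le
  have hP0 : 0 ≤ P := by
    rw [hPdef]
    apply Finset.sum_nonneg
    intro i hi
    by_cases h : i = i0
    · rw [h, hu0]; simp
    · have h1 := hune i h
      exact mul_nonneg (by linarith only [h1, hδ2]) (Real.exp_pos _).le
  have hAa0 : 0 ≤ Aa := by rw [hAadef]; exact Finset.sum_nonneg hKcu
  have hBb0 : 0 ≤ Bb := by rw [hBbdef]; exact Finset.sum_nonneg hKcv
  have hra0 : 0 ≤ ra := by
    rw [hradef]; exact Finset.sum_nonneg fun i _ => (Real.exp_pos _).le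
  have hrb0 : 0 ≤ rb := by
    rw [hrbdef]; exact Finset.sum_nonneg fun i _ => (Real.exp_pos _).le
  -- R bounds
  have hRu1 : 1 ≤ Ru := by
    have h := Finset.single_le_sum (f := fun i => Real.exp (u i))
      (fun i _ => (Real.exp_pos _).le) (Finset.mem_univ i0)
    simp only [hu0, Real.exp_zero, ← hRudef] at h
    exact h
  have hRv1 : 1 ≤ Rv := by
    have h := Finset.single_le_sum (f := fun i => Real.exp (v i))
      (fun i _ => (Real.exp_pos _).le) (Finset.mem_univ i0)
    simp only [hv0, Real.exp_zero, ← hRvdef] at h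
    exact h
  have hbound : ∀ w : Fin n → ℝ, w i0 = 0 → (∀ i : Fin n, i ≠ i0 → w i < -δ) →
      (∑ i, Real.exp (w i)) ≤ 9/8 := by
    intro w h0 hw
    have h1 : Real.exp (w i0) + ∑ i ∈ Finset.univ.erase i0, Real.exp (w i)
        = ∑ i, Real.exp (w i) :=
      Finset.add_sum_erase _ (fun i => Real.exp (w i)) (Finset.mem_univ i0)
    have h2 : (∑ i ∈ Finset.univ.erase i0, Real.exp (w i))
        ≤ (Finset.univ.erase i0).card • E := by
      apply Finset.sum_le_card_nsmul
      intro i hi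
      have h3 := hw i (Finset.ne_of_mem_erase hi)
      rw [hEdef]
      exact Real.exp_le_exp.mpr (by linarith only [h3])
    rw [nsmul_eq_mul] at h2
    have h4 := hcardn (Finset.univ.erase i0)
    have h5 : ((Finset.univ.erase i0).card : ℝ) * E ≤ (n:ℝ) * E :=
      mul_le_mul_of_nonneg_right h4 hEpos.le
    rw [h0, Real.exp_zero] at h1
    linarith only [h1, h2, h5, hnE]
  have hRu9 : Ru ≤ 9/8 := by rw [hRudef]; exact hbound u hu0 hune
  have hRv9 : Rv ≤ 9/8 := by rw [hRvdef]; exact hbound v hv0 hvne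
  -- tail sum bounds over Kc
  have hra9 : ra ≤ (9/8) * W := by
    have h1 : Real.exp (u ik) + ∑ i ∈ Kc.erase ik, Real.exp (u i) = ra := by
      rw [hradef]; exact Finset.add_sum_erase _ (fun i => Real.exp (u i)) hikKc
    have h2 : (∑ i ∈ Kc.erase ik, Real.exp (u i)) ≤ (Kc.erase ik).card • (W * E) := by
      apply Finset.sum_le_card_nsmul
      intro i hi
      have h3 := hutail i (hKctail i (Finset.mem_of_mem_erase hi) (Finset.ne_of_mem_erase hi))
      have h4 : W * E = Real.exp (-X + -δ) := by rw [hWdef, hEdef, ← Real.exp_add]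
      rw [h4]
      exact Real.exp_le_exp.mpr (by linarith only [h3])
    rw [nsmul_eq_mul] at h2
    have h5 : ((Kc.erase ik).card : ℝ) * (W * E) ≤ (n:ℝ) * (W * E) :=
      mul_le_mul_of_nonneg_right (hcardn _) (by positivity)
    have h6 : (n:ℝ) * (W * E) ≤ (1/8) * W := by
      nlinarith only [mul_le_mul_of_nonneg_right hnE hWpos.le]
    rw [huik] at h1
    have h7 : Real.exp (-X) = W := hWdef.symm
    rw [h7] at h1
    linarith only [h1, h2, h5, h6]
  have hAaX : X * W ≤ Aa := by
    have h := Finset.single_le_sum (f := fun i => (-(u i)) * Real.exp (u i)) hKcu hikKc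
    simp only [huik, neg_neg] at h
    rw [← hAadef] at h
    rw [hWdef]
    exact h
  have hBb54 : Bb ≤ (5/4) * (Y * Z) := by
    have hYpos : 0 < Y := by linarith only [hYX, hXδ, hδ2]
    have h1 : (-(v ik)) * Real.exp (v ik) + ∑ i ∈ Kc.erase ik, (-(v i)) * Real.exp (v i)
        = Bb := by
      rw [hBbdef]; exact Finset.add_sum_erase _ (fun i => (-(v i)) * Real.exp (v i)) hikKc
    have h2 : (∑ i ∈ Kc.erase ik, (-(v i)) * Real.exp (v i))
        ≤ (Kc.erase ik).card • ((Y + δ) * Real.exp (-(Y + δ))) := by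
      apply Finset.sum_le_card_nsmul
      intro i hi
      have h3 := hvtail i (hKctail i (Finset.mem_of_mem_erase hi) (Finset.ne_of_mem_erase hi))
      have h4 := te_anti (show 1 ≤ Y + δ by linarith only [hYpos, hδ2])
        (show Y + δ ≤ -(v i) by linarith only [h3])
      rw [neg_neg] at h4
      exact h4
    rw [nsmul_eq_mul] at h2
    have h5 : ((Kc.erase ik).card : ℝ) * ((Y + δ) * Real.exp (-(Y + δ)))
        ≤ (n:ℝ) * ((Y + δ) * Real.exp (-(Y + δ))) :=
      mul_le_mul_of_nonneg_right (hcardn _) (by positivity)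
    have h6 : Real.exp (-(Y + δ)) = Z * E := by
      rw [hZdef, hEdef, ← Real.exp_add]; ring_nf
    rw [h6] at h5
    have h7 : (n:ℝ) * ((Y + δ) * (Z * E)) ≤ (1/8) * ((Y + δ) * Z) := by
      have h8 := mul_le_mul_of_nonneg_right hnE
        (mul_nonneg (by linarith only [hYpos, hδ2] : (0:ℝ) ≤ Y + δ) hZpos.le)
      nlinarith only [h8]
    have h9 : (1/8) * ((Y + δ) * Z) ≤ (1/4) * (Y * Z) := by
      nlinarith only [mul_nonneg (show (0:ℝ) ≤ Y - δ by linarith only [hYX, hXδ, hδ2]) hZpos.le]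
    rw [hvik, neg_neg] at h1
    have h10 : Real.exp (-Y) = Z := hZdef.symm
    rw [h10] at h1
    rw [h6] at h2
    linarith only [h1, h2, h5, h7, h9]
  have hP8 : P ≤ δ / 8 := by
    have h2 : P ≤ K.card • (δ * E) := by
      rw [hPdef]
      apply Finset.sum_le_card_nsmul
      intro i hi
      by_cases h : i = i0
      · rw [h, hu0]
        simpa using mul_nonneg (show (0:ℝ) ≤ δ by linarith only [hδ2]) hEpos.le
      · have h3 := hune i h
        have h4 := te_anti (show (1:ℝ) ≤ δ by linarith only [hδ2])
          (show δ ≤ -(u i) by linarith only [h3])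
        rw [neg_neg] at h4
        rw [hEdef]
        exact h4
    rw [nsmul_eq_mul] at h2
    have h5 : (K.card : ℝ) * (δ * E) ≤ (n:ℝ) * (δ * E) :=
      mul_le_mul_of_nonneg_right (hcardn _) (by positivity)
    have h6 : (n:ℝ) * (δ * E) ≤ δ / 8 := by
      nlinarith only [mul_le_mul_of_nonneg_right hnE (show (0:ℝ) ≤ δ by linarith only [hδ2])]
    linarith only [h2, h5, h6]
  -- key comparison of Y e^{-Y} with X e^{-X}
  have hYZ6 : 6 * (Y * Z) ≤ X * W := by
    have hexpδ : (16:ℝ) ≤ Real.exp δ := by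
      have h3 : E * Real.exp δ = 1 := by rw [hEdef, ← Real.exp_add]; simp
      have h4 : (n:ℝ)^4 ≤ Real.exp δ := by
        have h5 := mul_le_mul_of_nonneg_right hn4E (Real.exp_pos δ).le
        calc (n:ℝ)^4 = (n:ℝ)^4 * (E * Real.exp δ) := by rw [h3, mul_one]
          _ ≤ Real.exp δ := by nlinarith only [h5]
      have h16 : (16:ℝ) ≤ (n:ℝ)^4 := by linarith only [hnn4, hn2]
      linarith only [h4, h16]
    have hs0 : 0 ≤ Y - X - δ := by linarith only [hYX]
    have he : 16 * (1 + (Y - X - δ)) ≤ Real.exp (Y - X) := by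
      have h1 := Real.add_one_le_exp (Y - X - δ)
      have h2 := mul_le_mul hexpδ h1 (by linarith only [hs0]) (by linarith only [hexpδ])
      rw [← Real.exp_add] at h2
      have h3 : δ + (Y - X - δ) = Y - X := by ring
      rw [h3] at h2
      linarith only [h2]
    have h6 : 6 * Y ≤ X * Real.exp (Y - X) := by
      nlinarith only [hs0, hXδ, hδ2,
        mul_le_mul_of_nonneg_left he (show (0:ℝ) ≤ X by linarith only [hXδ, hδ2]),
        mul_nonneg hs0 (show (0:ℝ) ≤ X - 2 by linarith only [hXδ, hδ2])]
    have h7 : W = Z * Real.exp (Y - X) := by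
      rw [hWdef, hZdef, ← Real.exp_add]; ring_nf
    calc 6 * (Y * Z) = (6 * Y) * Z := by ring
      _ ≤ (X * Real.exp (Y - X)) * Z := mul_le_mul_of_nonneg_right h6 hZpos.le
      _ = X * W := by rw [h7]; ring
  -- assembly
  have hXW0 : 0 ≤ X * W := mul_nonneg (by linarith only [hXδ, hδ2]) hWpos.le
  have hRupos : (0:ℝ) < Ru := by linarith only [hRu1]
  have hRvpos : (0:ℝ) < Rv := by linarith only [hRv1]
  have hnum : (1/2) * (X * W) ≤ (P + Aa) * Rv - (P + Bb) * Ru := by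
    have e1 : (P + Aa) * Rv - (P + Bb) * Ru = P * rb - P * ra + Aa * Rv - Bb * Ru := by
      rw [hRuQ, hRvQ]; ring
    rw [e1]
    have t1 : 0 ≤ P * rb := mul_nonneg hP0 hrb0
    have t2 : P * ra ≤ (δ/8) * ((9/8) * W) :=
      mul_le_mul hP8 hra9 hra0 (by linarith only [hδ2])
    have t2' : P * ra ≤ (9/64) * (X * W) := by
      nlinarith only [t2, mul_le_mul_of_nonneg_right hXδ.le hWpos.le]
    have t3 : Aa ≤ Aa * Rv := le_mul_of_one_le_right hAa0 hRv1
    have hYZ0 : 0 ≤ (5/4) * (Y * Z) := by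
      nlinarith only [mul_pos (show (0:ℝ) < Y by linarith only [hYX, hXδ, hδ2]) hZpos]
    have t4 : Bb * Ru ≤ ((5/4) * (Y * Z)) * (9/8) :=
      mul_le_mul hBb54 hRu9 (by linarith only [hRu1]) hYZ0
    have t4' : Bb * Ru ≤ (45/192) * (X * W) := by nlinarith only [t4, hYZ6]
    linarith only [t1, t2', t3, t4', hAaX, hXW0]
  have hRR : Rv * Ru ≤ 2 := by
    nlinarith only [hRu9, hRv9, hRu1, hRv1,
      mul_nonneg (by linarith only [hRv9] : (0:ℝ) ≤ 9/8 - Rv)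
        (by linarith only [hRu1] : (0:ℝ) ≤ Ru - 1)]
  have hRRpos : 0 < Rv * Ru := mul_pos hRvpos hRupos
  have hΔ : (1/4) * (X * W) ≤ boltz b - boltz a := by
    have hshift_a : boltz u = boltz a - c := by
      rw [hudef]; exact boltz_shift hn0 a c
    have hshift_b : boltz v = boltz b - c := by
      rw [hvdef]; exact boltz_shift hn0 b c
    have hdiff : boltz b - boltz a = boltz v - boltz u := by
      rw [hshift_a, hshift_b]; ring
    rw [hdiff, boltz_eq_div u, boltz_eq_div v, hTu, hTv, ← hRudef, ← hRvdef,
      div_sub_div _ _ (ne_of_gt hRvpos) (ne_of_gt hRupos)]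
    have hnum2 : (1/2) * (X * W) ≤ (-(P + Bb)) * Ru - Rv * (-(P + Aa)) := by
      linarith only [hnum]
    have h9 : (1/4) * (X * W) ≤ ((1/2) * (X * W)) / (Rv * Ru) := by
      rw [le_div_iff₀ hRRpos]
      nlinarith only [mul_le_mul_of_nonneg_left hRR
        (show (0:ℝ) ≤ (1/4)*(X*W) by linarith only [hXW0])]
    calc (1/4) * (X * W) ≤ ((1/2) * (X * W)) / (Rv * Ru) := h9
      _ ≤ ((-(P + Bb)) * Ru - Rv * (-(P + Aa))) / (Rv * Ru) :=
        (div_le_div_iff_of_pos_right hRRpos).mpr hnum2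
  have hWZ : (n:ℝ)^4 * Z ≤ W := by
    have h1 : Real.exp δ ≤ Real.exp (Y - X) := Real.exp_le_exp.mpr (by linarith only [hYX])
    have h3 : E * Real.exp δ = 1 := by rw [hEdef, ← Real.exp_add]; simp
    have h2 : (n:ℝ)^4 ≤ Real.exp δ := by
      have h5 := mul_le_mul_of_nonneg_right hn4E (Real.exp_pos δ).le
      calc (n:ℝ)^4 = (n:ℝ)^4 * (E * Real.exp δ) := by rw [h3, mul_one]
        _ ≤ Real.exp δ := by nlinarith only [h5]
    have h4 : W = Z * Real.exp (Y - X) := by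
      rw [hWdef, hZdef, ← Real.exp_add]; ring_nf
    nlinarith only [h4, mul_le_mul_of_nonneg_right h2 hZpos.le,
      mul_le_mul_of_nonneg_right h1 hZpos.le]
  have hfinal : L^2 * Z < (1/4) * (X * W) := by
    have hLn4 : L < (n:ℝ)^4 := by
      have h1 := Real.log_le_sub_one_of_pos (show (0:ℝ) < n by linarith only [hn2])
      have h2 : L ≤ (n:ℝ) - 1 := by rw [hLdef]; exact h1
      linarith only [h2, hn2, hnn4]
    have hX4L : 4 * L ≤ X := by linarith only [hδ, hXδ]
    nlinarith only [
      mul_le_mul hX4L hWZ (by positivity) (show (0:ℝ) ≤ X by linarith only [hXδ, hδ2]),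
      mul_pos (mul_pos (show (0:ℝ) < (n:ℝ)^4 - L by linarith only [hLn4]) hL) hZpos]
  rw [abs_sub_comm]
  calc L^2 * Z < (1/4) * (X * W) := hfinal
    _ ≤ boltz b - boltz a := hΔ
    _ ≤ |boltz b - boltz a| := le_abs_self _
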